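/- Let K be a field, let N ≥ 2, and let (x_n)_{n≥1} be a sequence in K with x_n ≠ 0 for all n, satisfying x_n x_{n+N} = x_{n+1} x_{n+N−1} + 1 for all n ≥ 1. Set c_n := (x_n + x_{n+2})/x_{n+1}, so that c_{n+N−1} = c_n for all n. For n ≥ 1 and k ≥ 1, let t^{n}_{k,alt} denote the sum, over all sequences 1 ≤ i₁ < i₂ < ⋯ < i_k ≤ n in which consecutive indices have opposite parity (i.e. i_{j+1} − i_j is odd for each j), of the products c_{i₁} c_{i₂} ⋯ c_{i_k}; and set t^{n}_{0,alt} := 2. Then x_1 + x_{2N−1} = S_{N,1} · x_N, where S_{N,1} = (−1)^{r−1} Σ_{k=0}^{r−1} (−1)^k t^{(2r−1)}_{2k+1,alt} if N = 2r is even, and S_{N,1} = (−1)^{r−1} Σ_{k=0}^{r−1} (−1)^k t^{(2r−2)}_{2k,alt} if N = 2r−1 is odd. -/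

import Mathlib

open Finset

/-- `t^n_{k,alt}` for a sequence `c`: the sum, over all strictly increasing sequences
`1 ≤ i₁ < ⋯ < i_k ≤ n` in which consecutive indices have opposite parity
(i.e. `i_{j+1} − i_j` is odd for each `j`), of `c_{i₁} ⋯ c_{i_k}`, with
`t^n_{0,alt} := 2`. -/
def altSum {K : Type*} [CommRing K] (c : ℕ → K) (n k : ℕ) : K :=
  if k = 0 then 2
  else ∑ s ∈ (Finset.powersetCard k (Finset.Icc 1 n)).filter
      (fun s => (s.sort (· ≤ ·)).IsChain fun a b => (a + b) % 2 = 1),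
    ∏ i ∈ s, c i

/-- continuant `K(c₁,…,c_n)` for the recurrence `t_{m+2} = c_{m+2} t_{m+1} − t_m`. -/
def KK {K : Type*} [CommRing K] (c : ℕ → K) : ℕ → K
  | 0 => 1
  | 1 => c 1
  | n + 2 => c (n + 2) * KK c (n + 1) - KK c n

/-- shifted continuant `K(c₂,…,c_{n−1})`. -/
def LL {K : Type*} [CommRing K] (c : ℕ → K) : ℕ → K
  | 0 => -1
  | 1 => 0
  | n + 2 => c (n + 1) * LL c (n + 1) - LL c n

lemma KK_add_two {K : Type*} [CommRing K] (c : ℕ → K) (n : ℕ) :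
    KK c (n + 2) = c (n + 2) * KK c (n + 1) - KK c n := rfl

lemma LL_add_two {K : Type*} [CommRing K] (c : ℕ → K) (n : ℕ) :
    LL c (n + 2) = c (n + 1) * LL c (n + 1) - LL c n := rfl

/-- refined alternating sum: only subsets whose maximum has the same parity as `n`. -/
def UU {K : Type*} [CommRing K] (c : ℕ → K) (n k : ℕ) : K :=
  ∑ s ∈ (Finset.powersetCard k (Finset.Icc 1 n)).filter
      (fun s => ((s.sort (· ≤ ·)).IsChain fun a b => (a + b) % 2 = 1) ∧
        ∀ m ∈ (s.sort (· ≤ ·)).getLast?, m % 2 = n % 2),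
    ∏ i ∈ s, c i

section Combinatorial

variable {K : Type*} [CommRing K] (c : ℕ → K)

lemma sort_append (s : Finset ℕ) (a : ℕ) (ha : ∀ x ∈ s, x < a) :
    (insert a s).sort (· ≤ ·) = s.sort (· ≤ ·) ++ [a] := by
  have ha' : a ∉ s := fun h => lt_irrefl a (ha a h)
  refine (fun hp h2 => List.Perm.eq_of_pairwise' (Finset.pairwise_sort _ _) h2 hp) ?_ ?_
  · refine ((Finset.sort_perm_toList (r := (· ≤ ·)) (insert a s)).trans ((Finset.toList_insert ha').trans
      ((Finset.sort_perm_toList (r := (· ≤ ·)) s).symm.cons a))).trans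
      (List.perm_append_singleton a _).symm
  · refine List.pairwise_append.2 ⟨Finset.pairwise_sort _ _, List.pairwise_singleton _ _, ?_⟩
    intro x hx y hy
    rw [List.mem_singleton] at hy
    subst hy
    exact le_of_lt (ha x (Finset.mem_sort (α := ℕ) (· ≤ ·) |>.mp hx))

lemma le_getLast_of_mem (s : Finset ℕ) (x : ℕ) (hx : x ∈ s) {M : ℕ}
    (hM : M ∈ (s.sort (· ≤ ·)).getLast?) : x ≤ M := by
  set l := s.sort (· ≤ ·) with hl
  have hs : l.Pairwise (· ≤ ·) := Finset.pairwise_sort _ _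
  have hne : l ≠ [] := by
    intro h
    rw [h] at hM
    simp at hM
  have hMl : l.getLast hne = M := by
    rw [List.getLast?_eq_getLast_of_ne_nil hne] at hM
    simpa using hM
  have hxl : x ∈ l := (Finset.mem_sort (α := ℕ) (· ≤ ·)).mpr hx
  have hsplit := List.dropLast_append_getLast hne
  have hp : List.Pairwise (· ≤ ·) (l.dropLast ++ [l.getLast hne]) := by
    rw [hsplit]; exact hs
  obtain ⟨-, -, h3⟩ := List.pairwise_append.mp hp
  rcases List.mem_append.mp (by rw [hsplit]; exact hxl : x ∈ l.dropLast ++ [l.getLast hne])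
    with h | h
  · have := h3 x h (l.getLast hne) (List.mem_singleton_self _)
    omega
  · rw [List.mem_singleton] at h
    omega

lemma UU_zero (n : ℕ) : UU c n 0 = 1 := by
  rw [UU, Finset.powersetCard_zero]
  rw [Finset.filter_singleton]
  simp

lemma UU_eq_zero {n k : ℕ} (h : n < k) : UU c n k = 0 := by
  rw [UU, Finset.powersetCard_eq_empty.mpr (by simp [Nat.card_Icc]; omega)]
  simp

lemma UU_one_one : UU c 1 1 = c 1 := by
  have h1 : Finset.powersetCard 1 (Finset.Icc 1 1) = {{1}} := by decide
  rw [UU, h1, Finset.filter_singleton]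
  simp

lemma chain_concat_iff (s : Finset ℕ) (a : ℕ) (ha : ∀ x ∈ s, x < a) :
    (((insert a s).sort (· ≤ ·)).IsChain fun p q => (p + q) % 2 = 1) ↔
      ((((s.sort (· ≤ ·)).IsChain fun p q => (p + q) % 2 = 1)) ∧
        ∀ m ∈ (s.sort (· ≤ ·)).getLast?, (m + a) % 2 = 1) := by
  rw [sort_append s a ha, List.isChain_append]
  simp

lemma exists_getLast (s : Finset ℕ) (h : s.Nonempty) :
    ∃ M, (s.sort (· ≤ ·)).getLast? = some M ∧ M ∈ s := by
  have hne : s.sort (· ≤ ·) ≠ [] := by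
    intro hh
    have hl := Finset.length_sort (α := ℕ) (r := (· ≤ ·)) (s := s)
    rw [hh] at hl
    simp only [List.length_nil] at hl
    exact h.ne_empty (Finset.card_eq_zero.mp hl.symm)
  exact ⟨_, List.getLast?_eq_getLast_of_ne_nil hne,
    (Finset.mem_sort (α := ℕ) (· ≤ ·)).mp (List.getLast_mem hne)⟩

lemma UU_rec (n k : ℕ) :
    UU c (n + 2) (k + 1) = c (n + 2) * UU c (n + 1) k + UU c n (k + 1) := by
  classical
  have hsplit := Finset.sum_filter_add_sum_filter_not
    ((Finset.powersetCard (k + 1) (Finset.Icc 1 (n + 2))).filter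
      (fun s => ((s.sort (· ≤ ·)).IsChain fun a b => (a + b) % 2 = 1) ∧
        ∀ m ∈ (s.sort (· ≤ ·)).getLast?, m % 2 = (n + 2) % 2))
    (fun s : Finset ℕ => (n + 2) ∈ s)
    (fun s => ∏ i ∈ s, c i)
  rw [UU, ← hsplit]
  congr 1
  · rw [UU, Finset.mul_sum]
    refine Finset.sum_nbij' (fun s => s.erase (n + 2)) (fun t => insert (n + 2) t)
      ?_ ?_ ?_ ?_ ?_
    · intro s hs
      simp only [Finset.mem_filter, Finset.mem_powersetCard] at hs ⊢
      obtain ⟨⟨⟨hsub, hcard⟩, hchain, _⟩, hmem⟩ := hs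
      have hlt : ∀ x ∈ s.erase (n + 2), x < n + 2 := by
        intro x hx
        have hx2 := hsub (Finset.mem_of_mem_erase hx)
        rw [Finset.mem_Icc] at hx2
        have hne := Finset.ne_of_mem_erase hx
        omega
      rw [← Finset.insert_erase hmem, chain_concat_iff _ _ hlt] at hchain
      refine ⟨⟨?_, ?_⟩, hchain.1, ?_⟩
      · intro x hx
        have hx2 := hsub (Finset.mem_of_mem_erase hx)
        rw [Finset.mem_Icc] at hx2 ⊢
        have := hlt x hx
        omega
      · rw [Finset.card_erase_of_mem hmem, hcard]
        omega
      · intro m hm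
        have := hchain.2 m hm
        omega
    · intro t ht
      simp only [Finset.mem_filter, Finset.mem_powersetCard] at ht ⊢
      obtain ⟨⟨hsub, hcard⟩, hchain, hlast⟩ := ht
      have hnotmem : (n + 2) ∉ t := by
        intro h
        have := hsub h
        rw [Finset.mem_Icc] at this
        omega
      have hlt : ∀ x ∈ t, x < n + 2 := by
        intro x hx
        have := hsub hx
        rw [Finset.mem_Icc] at this
        omega
      refine ⟨⟨⟨?_, ?_⟩, ?_, ?_⟩, Finset.mem_insert_self _ _⟩
      · intro x hx
        rcases Finset.mem_insert.mp hx with rfl | hx'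
        · rw [Finset.mem_Icc]; omega
        · have := hsub hx'
          rw [Finset.mem_Icc] at this ⊢
          omega
      · rw [Finset.card_insert_of_notMem hnotmem, hcard]
      · rw [chain_concat_iff _ _ hlt]
        refine ⟨hchain, fun m hm => ?_⟩
        have := hlast m hm
        omega
      · rw [sort_append t _ hlt]
        intro m hm
        rw [List.getLast?_concat] at hm
        simp only [Option.mem_def, Option.some.injEq] at hm
        omega
    · intro s hs
      simp only [Finset.mem_filter] at hs
      exact Finset.insert_erase hs.2
    · intro t ht
      simp only [Finset.mem_filter, Finset.mem_powersetCard] at ht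
      refine Finset.erase_insert fun h => ?_
      have := ht.1.1 h
      rw [Finset.mem_Icc] at this
      omega
    · intro s hs
      simp only [Finset.mem_filter] at hs
      exact (Finset.mul_prod_erase s c hs.2).symm
  · rw [UU]
    apply Finset.sum_congr ?_ (fun _ _ => rfl)
    ext s
    simp only [Finset.mem_filter, Finset.mem_powersetCard]
    constructor
    · rintro ⟨⟨⟨hsub, hcard⟩, hchain, hlast⟩, hnot⟩
      have hs : s.Nonempty := Finset.card_pos.mp (by omega)
      obtain ⟨M, hM, hMs⟩ := exists_getLast s hs
      have hMp := hlast M hM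
      have hMle := hsub hMs
      rw [Finset.mem_Icc] at hMle
      have hMne : M ≠ n + 2 := fun h => hnot (h ▸ hMs)
      have hMn : M ≤ n := by omega
      refine ⟨⟨?_, hcard⟩, hchain, ?_⟩
      · intro x hx
        have h1 := hsub hx
        rw [Finset.mem_Icc] at h1 ⊢
        have := le_getLast_of_mem s x hx hM
        omega
      · intro m hm
        rw [hM] at hm
        simp only [Option.mem_def, Option.some.injEq] at hm
        omega
    · rintro ⟨⟨hsub, hcard⟩, hchain, hlast⟩
      have hnot : (n + 2) ∉ s := fun h => by
        have := hsub h
        rw [Finset.mem_Icc] at this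
        omega
      refine ⟨⟨⟨?_, hcard⟩, hchain, ?_⟩, hnot⟩
      · intro x hx
        have := hsub hx
        rw [Finset.mem_Icc] at this ⊢
        omega
      · intro m hm
        have := hlast m hm
        omega

lemma altSum_eq (n k : ℕ) : altSum c (n + 1) k = UU c (n + 1) k + UU c n k := by
  classical
  rcases k with _ | k
  · rw [show altSum c (n + 1) 0 = 2 from if_pos rfl, UU_zero, UU_zero]
    norm_num
  · rw [show altSum c (n + 1) (k + 1) = ∑ s ∈
        (Finset.powersetCard (k + 1) (Finset.Icc 1 (n + 1))).filter
          (fun s => (s.sort (· ≤ ·)).IsChain fun a b => (a + b) % 2 = 1),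
        ∏ i ∈ s, c i from if_neg (Nat.succ_ne_zero k)]
    have hsplit := Finset.sum_filter_add_sum_filter_not
      ((Finset.powersetCard (k + 1) (Finset.Icc 1 (n + 1))).filter
        (fun s => (s.sort (· ≤ ·)).IsChain fun a b => (a + b) % 2 = 1))
      (fun s => ∀ m ∈ (s.sort (· ≤ ·)).getLast?, m % 2 = (n + 1) % 2)
      (fun s => ∏ i ∈ s, c i)
    rw [← hsplit]
    congr 1
    · rw [UU]
      apply Finset.sum_congr ?_ (fun _ _ => rfl)
      ext s
      simp only [Finset.mem_filter]
      tauto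
    · rw [UU]
      apply Finset.sum_congr ?_ (fun _ _ => rfl)
      ext s
      simp only [Finset.mem_filter, Finset.mem_powersetCard]
      constructor
      · rintro ⟨⟨⟨hsub, hcard⟩, hchain⟩, hnot⟩
        have hs : s.Nonempty := Finset.card_pos.mp (by omega)
        obtain ⟨M, hM, hMs⟩ := exists_getLast s hs
        push_neg at hnot
        obtain ⟨M', hM', hMp⟩ := hnot
        rw [hM] at hM'
        simp only [Option.mem_def, Option.some.injEq] at hM'
        have hMM : M = M' := by simpa using hM'
        subst hMM
        have hMle := hsub hMs
        rw [Finset.mem_Icc] at hMle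
        have hMn : M ≤ n := by omega
        refine ⟨⟨?_, hcard⟩, hchain, ?_⟩
        · intro x hx
          have h1 := hsub hx
          rw [Finset.mem_Icc] at h1 ⊢
          have := le_getLast_of_mem s x hx hM
          omega
        · intro m hm
          rw [hM] at hm
          simp only [Option.mem_def, Option.some.injEq] at hm
          omega
      · rintro ⟨⟨hsub, hcard⟩, hchain, hlast⟩
        refine ⟨⟨⟨?_, hcard⟩, hchain⟩, ?_⟩
        · intro x hx
          have := hsub hx
          rw [Finset.mem_Icc] at this ⊢
          omega
        · intro hbad
          have hs : s.Nonempty := Finset.card_pos.mp (by omega)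
          obtain ⟨M, hM, hMs⟩ := exists_getLast s hs
          have h1 := hlast M hM
          have h2 := hbad M hM
          have := hsub hMs
          rw [Finset.mem_Icc] at this
          omega

lemma Gsum_eq (n : ℕ) :
    ∑ j ∈ Finset.range (n / 2 + 1), (-1 : K) ^ j * UU c n (n - 2 * j) = KK c n := by
  induction n using Nat.twoStepInduction with
  | zero => simp [UU_zero, KK]
  | one =>
    rw [show 1 / 2 + 1 = 1 by norm_num, Finset.sum_range_one]
    simp [UU_one_one, KK]
  | more n ih1 ih2 =>
    rcases Nat.even_or_odd n with ⟨m, hm⟩ | ⟨m, hm⟩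
    · -- n = m + m
      subst hm
      rw [show (m + m + 2) / 2 + 1 = (m + 1) + 1 by omega, Finset.sum_range_succ,
        show m + m + 2 - 2 * (m + 1) = 0 by omega, UU_zero]
      have hterm : ∀ j ∈ Finset.range (m + 1),
          (-1 : K) ^ j * UU c (m + m + 2) (m + m + 2 - 2 * j)
          = (-1 : K) ^ j * (c (m + m + 2) * UU c (m + m + 1) (m + m + 1 - 2 * j))
            + (-1 : K) ^ j * UU c (m + m) (m + m + 2 - 2 * j) := by
        intro j hj
        rw [Finset.mem_range] at hj
        rw [show m + m + 2 - 2 * j = (m + m + 1 - 2 * j) + 1 by omega, UU_rec,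
          show m + m + 1 - 2 * j + 1 = m + m + 2 - 2 * j by omega]
        ring
      rw [Finset.sum_congr rfl hterm, Finset.sum_add_distrib]
      have hA : ∑ j ∈ Finset.range (m + 1),
          (-1 : K) ^ j * (c (m + m + 2) * UU c (m + m + 1) (m + m + 1 - 2 * j))
          = c (m + m + 2) * ∑ j ∈ Finset.range (m + 1),
            (-1 : K) ^ j * UU c (m + m + 1) (m + m + 1 - 2 * j) := by
        rw [Finset.mul_sum]
        exact Finset.sum_congr rfl fun j _ => by ring
      rw [show (m + m + 1) / 2 + 1 = m + 1 by omega] at ih2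
      rw [hA, ih2]
      have hB : ∑ j ∈ Finset.range (m + 1), (-1 : K) ^ j * UU c (m + m) (m + m + 2 - 2 * j)
          = -(KK c (m + m)) + (-1 : K) ^ m := by
        rw [Finset.sum_range_succ']
        rw [UU_eq_zero c (show m + m < m + m + 2 - 2 * 0 by omega), mul_zero, add_zero]
        have hterm2 : ∀ j ∈ Finset.range m,
            (-1 : K) ^ (j + 1) * UU c (m + m) (m + m + 2 - 2 * (j + 1))
            = -((-1 : K) ^ j * UU c (m + m) (m + m - 2 * j)) := by
          intro j hj
          rw [show m + m + 2 - 2 * (j + 1) = m + m - 2 * j by omega, pow_succ]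
          ring
        rw [Finset.sum_congr rfl hterm2, Finset.sum_neg_distrib]
        rw [show (m + m) / 2 + 1 = m + 1 by omega, Finset.sum_range_succ,
          show m + m - 2 * m = 0 by omega, UU_zero, mul_one] at ih1
        linear_combination -ih1
      rw [hB]
      have eK : KK c (m + m + 2) = c (m + m + 2) * KK c (m + m + 1) - KK c (m + m) :=
        KK_add_two c (m + m)
      rw [eK, pow_succ]
      ring
    · -- n = 2 * m + 1
      subst hm
      rw [show (2 * m + 1 + 2) / 2 + 1 = m + 2 by omega]
      have hterm : ∀ j ∈ Finset.range (m + 2),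
          (-1 : K) ^ j * UU c (2 * m + 1 + 2) (2 * m + 1 + 2 - 2 * j)
          = (-1 : K) ^ j * (c (2 * m + 1 + 2) * UU c (2 * m + 1 + 1) (2 * m + 2 - 2 * j))
            + (-1 : K) ^ j * UU c (2 * m + 1) (2 * m + 1 + 2 - 2 * j) := by
        intro j hj
        rw [Finset.mem_range] at hj
        rw [show 2 * m + 1 + 2 - 2 * j = (2 * m + 2 - 2 * j) + 1 by omega, UU_rec,
          show 2 * m + 2 - 2 * j + 1 = 2 * m + 1 + 2 - 2 * j by omega]
        ring
      rw [Finset.sum_congr rfl hterm, Finset.sum_add_distrib]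
      have hA : ∑ j ∈ Finset.range (m + 2),
          (-1 : K) ^ j * (c (2 * m + 1 + 2) * UU c (2 * m + 1 + 1) (2 * m + 2 - 2 * j))
          = c (2 * m + 1 + 2) * ∑ j ∈ Finset.range (m + 2),
            (-1 : K) ^ j * UU c (2 * m + 1 + 1) (2 * m + 2 - 2 * j) := by
        rw [Finset.mul_sum]
        exact Finset.sum_congr rfl fun j _ => by ring
      rw [show (2 * m + 1 + 1) / 2 + 1 = m + 2 by omega] at ih2
      have ih2' : ∑ j ∈ Finset.range (m + 2),
          (-1 : K) ^ j * UU c (2 * m + 1 + 1) (2 * m + 2 - 2 * j) = KK c (2 * m + 1 + 1) := by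
        rw [← ih2]
      rw [hA, ih2']
      have hB : ∑ j ∈ Finset.range (m + 2),
          (-1 : K) ^ j * UU c (2 * m + 1) (2 * m + 1 + 2 - 2 * j)
          = -(KK c (2 * m + 1)) := by
        rw [Finset.sum_range_succ']
        rw [UU_eq_zero c (show 2 * m + 1 < 2 * m + 1 + 2 - 2 * 0 by omega), mul_zero, add_zero]
        have hterm2 : ∀ j ∈ Finset.range (m + 1),
            (-1 : K) ^ (j + 1) * UU c (2 * m + 1) (2 * m + 1 + 2 - 2 * (j + 1))
            = -((-1 : K) ^ j * UU c (2 * m + 1) (2 * m + 1 - 2 * j)) := by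
          intro j hj
          rw [show 2 * m + 1 + 2 - 2 * (j + 1) = 2 * m + 1 - 2 * j by omega, pow_succ]
          ring
        rw [Finset.sum_congr rfl hterm2, Finset.sum_neg_distrib]
        rw [show (2 * m + 1) / 2 + 1 = m + 1 by omega] at ih1
        rw [ih1]
      rw [hB]
      have eK : KK c (2 * m + 1 + 2) = c (2 * m + 1 + 2) * KK c (2 * m + 1 + 1)
          - KK c (2 * m + 1) := KK_add_two c (2 * m + 1)
      rw [eK]
      ring

lemma LL_two : LL c 2 = 1 := by
  have h := LL_add_two c 0
  norm_num at h
  rw [h, show LL c 1 = 0 from rfl, show LL c 0 = -1 from rfl]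
  ring

lemma Hsum_eq (n : ℕ) :
    ∑ j ∈ Finset.range ((n + 1) / 2), (-1 : K) ^ j * UU c n (n - 1 - 2 * j)
      = LL c (n + 1) := by
  induction n using Nat.twoStepInduction with
  | zero => simp [LL]
  | one =>
    rw [show (1 + 1) / 2 = 1 by norm_num, Finset.sum_range_one]
    have h0 : UU c 1 (1 - 1 - 2 * 0) = 1 := UU_zero c 1
    rw [h0, LL_two]
    ring
  | more n ih1 ih2 =>
    rcases Nat.even_or_odd n with ⟨m, hm⟩ | ⟨m, hm⟩
    · -- n = m + m
      subst hm
      rw [show (m + m + 2 + 1) / 2 = m + 1 by omega]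
      have hterm : ∀ j ∈ Finset.range (m + 1),
          (-1 : K) ^ j * UU c (m + m + 2) (m + m + 2 - 1 - 2 * j)
          = (-1 : K) ^ j * (c (m + m + 2) * UU c (m + m + 1) (m + m - 2 * j))
            + (-1 : K) ^ j * UU c (m + m) (m + m + 1 - 2 * j) := by
        intro j hj
        rw [Finset.mem_range] at hj
        rw [show m + m + 2 - 1 - 2 * j = (m + m - 2 * j) + 1 by omega, UU_rec,
          show m + m - 2 * j + 1 = m + m + 1 - 2 * j by omega]
        ring
      rw [Finset.sum_congr rfl hterm, Finset.sum_add_distrib]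
      have hA : ∑ j ∈ Finset.range (m + 1),
          (-1 : K) ^ j * (c (m + m + 2) * UU c (m + m + 1) (m + m - 2 * j))
          = c (m + m + 2) * ∑ j ∈ Finset.range (m + 1),
            (-1 : K) ^ j * UU c (m + m + 1) (m + m - 2 * j) := by
        rw [Finset.mul_sum]
        exact Finset.sum_congr rfl fun j _ => by ring
      rw [show (m + m + 1 + 1) / 2 = m + 1 by omega] at ih2
      have ih2' : ∑ j ∈ Finset.range (m + 1),
          (-1 : K) ^ j * UU c (m + m + 1) (m + m - 2 * j) = LL c (m + m + 2) := ih2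
      rw [hA, ih2']
      have hB : ∑ j ∈ Finset.range (m + 1),
          (-1 : K) ^ j * UU c (m + m) (m + m + 1 - 2 * j) = -(LL c (m + m + 1)) := by
        rw [Finset.sum_range_succ']
        rw [UU_eq_zero c (show m + m < m + m + 1 - 2 * 0 by omega), mul_zero, add_zero]
        have hterm2 : ∀ j ∈ Finset.range m,
            (-1 : K) ^ (j + 1) * UU c (m + m) (m + m + 1 - 2 * (j + 1))
            = -((-1 : K) ^ j * UU c (m + m) (m + m - 1 - 2 * j)) := by
          intro j hj
          rw [show m + m + 1 - 2 * (j + 1) = m + m - 1 - 2 * j by omega, pow_succ]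
          ring
        rw [Finset.sum_congr rfl hterm2, Finset.sum_neg_distrib]
        rw [show (m + m + 1) / 2 = m by omega] at ih1
        rw [ih1]
      rw [hB]
      have eL : LL c (m + m + 3) = c (m + m + 2) * LL c (m + m + 2) - LL c (m + m + 1) :=
        LL_add_two c (m + m + 1)
      have egoal : LL c (m + m + 2 + 1) = LL c (m + m + 3) := rfl
      rw [egoal, eL]
      ring
    · -- n = 2 * m + 1
      subst hm
      rw [show (2 * m + 1 + 2 + 1) / 2 = (m + 1) + 1 by omega, Finset.sum_range_succ,
        show 2 * m + 1 + 2 - 1 - 2 * (m + 1) = 0 by omega, UU_zero]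
      have hterm : ∀ j ∈ Finset.range (m + 1),
          (-1 : K) ^ j * UU c (2 * m + 1 + 2) (2 * m + 1 + 2 - 1 - 2 * j)
          = (-1 : K) ^ j * (c (2 * m + 1 + 2) * UU c (2 * m + 1 + 1) (2 * m + 1 - 2 * j))
            + (-1 : K) ^ j * UU c (2 * m + 1) (2 * m + 2 - 2 * j) := by
        intro j hj
        rw [Finset.mem_range] at hj
        rw [show 2 * m + 1 + 2 - 1 - 2 * j = (2 * m + 1 - 2 * j) + 1 by omega, UU_rec,
          show 2 * m + 1 - 2 * j + 1 = 2 * m + 2 - 2 * j by omega]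
        ring
      rw [Finset.sum_congr rfl hterm, Finset.sum_add_distrib]
      have hA : ∑ j ∈ Finset.range (m + 1),
          (-1 : K) ^ j * (c (2 * m + 1 + 2) * UU c (2 * m + 1 + 1) (2 * m + 1 - 2 * j))
          = c (2 * m + 1 + 2) * ∑ j ∈ Finset.range (m + 1),
            (-1 : K) ^ j * UU c (2 * m + 1 + 1) (2 * m + 1 - 2 * j) := by
        rw [Finset.mul_sum]
        exact Finset.sum_congr rfl fun j _ => by ring
      rw [show (2 * m + 1 + 1 + 1) / 2 = m + 1 by omega] at ih2
      have ih2' : ∑ j ∈ Finset.range (m + 1),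
          (-1 : K) ^ j * UU c (2 * m + 1 + 1) (2 * m + 1 - 2 * j)
          = LL c (2 * m + 1 + 2) := ih2
      rw [hA, ih2']
      have hB : ∑ j ∈ Finset.range (m + 1),
          (-1 : K) ^ j * UU c (2 * m + 1) (2 * m + 2 - 2 * j)
          = -(LL c (2 * m + 1 + 1)) + (-1 : K) ^ m := by
        rw [Finset.sum_range_succ']
        rw [UU_eq_zero c (show 2 * m + 1 < 2 * m + 2 - 2 * 0 by omega), mul_zero, add_zero]
        have hterm2 : ∀ j ∈ Finset.range m,
            (-1 : K) ^ (j + 1) * UU c (2 * m + 1) (2 * m + 2 - 2 * (j + 1))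
            = -((-1 : K) ^ j * UU c (2 * m + 1) (2 * m + 1 - 1 - 2 * j)) := by
          intro j hj
          rw [show 2 * m + 2 - 2 * (j + 1) = 2 * m + 1 - 1 - 2 * j by omega, pow_succ]
          ring
        rw [Finset.sum_congr rfl hterm2, Finset.sum_neg_distrib]
        rw [show (2 * m + 1 + 1) / 2 = m + 1 by omega, Finset.sum_range_succ,
          show 2 * m + 1 - 1 - 2 * m = 0 by omega, UU_zero, mul_one] at ih1
        linear_combination -ih1
      rw [hB]
      have eL : LL c (2 * m + 1 + 3) = c (2 * m + 1 + 2) * LL c (2 * m + 1 + 2)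
          - LL c (2 * m + 1 + 1) := LL_add_two c (2 * m + 1 + 1)
      have egoal : LL c (2 * m + 1 + 2 + 1) = LL c (2 * m + 1 + 3) := rfl
      rw [egoal, eL, pow_succ]
      ring

lemma key_sum (n : ℕ) (hn : 1 ≤ n) :
    ∑ j ∈ Finset.range (n / 2 + 1), (-1 : K) ^ j * altSum c n (n - 2 * j)
      = KK c n - LL c n := by
  rcases n with _ | p
  · omega
  have hterm : ∀ j ∈ Finset.range ((p + 1) / 2 + 1),
      (-1 : K) ^ j * altSum c (p + 1) (p + 1 - 2 * j)
      = (-1 : K) ^ j * UU c (p + 1) (p + 1 - 2 * j)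
        + (-1 : K) ^ j * UU c p (p + 1 - 2 * j) := by
    intro j _
    rw [altSum_eq]
    ring
  rw [Finset.sum_congr rfl hterm, Finset.sum_add_distrib, Gsum_eq]
  have hB : ∑ j ∈ Finset.range ((p + 1) / 2 + 1),
      (-1 : K) ^ j * UU c p (p + 1 - 2 * j) = -(LL c (p + 1)) := by
    rw [Finset.sum_range_succ']
    rw [UU_eq_zero c (show p < p + 1 - 2 * 0 by omega), mul_zero, add_zero]
    have hterm2 : ∀ j ∈ Finset.range ((p + 1) / 2),
        (-1 : K) ^ (j + 1) * UU c p (p + 1 - 2 * (j + 1))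
        = -((-1 : K) ^ j * UU c p (p - 1 - 2 * j)) := by
      intro j hj
      rw [show p + 1 - 2 * (j + 1) = p - 1 - 2 * j by omega, pow_succ]
      ring
    rw [Finset.sum_congr rfl hterm2, Finset.sum_neg_distrib, Hsum_eq]
  rw [hB]
  ring

end Combinatorial

/-- Explicit linearisation for the recurrence of the primitive `P_N^(1)`:
`x_1 + x_{2N−1} = S_{N,1} x_N` with `S_{N,1}` given by alternating-parity sums in the
periodic quantities `c_n = (x_n + x_{n+2})/x_{n+1}`. -/
theorem stmt15 (K : Type*) [Field K] (N : ℕ) (hN : 2 ≤ N) (x : ℕ → K)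
    (hx : ∀ n, 1 ≤ n → x n ≠ 0)
    (hrec : ∀ n, 1 ≤ n → x n * x (n + N) = x (n + 1) * x (n + N - 1) + 1)
    (c : ℕ → K) (hc : ∀ n, c n = (x n + x (n + 2)) / x (n + 1)) :
    (∀ r, 1 ≤ r → N = 2 * r →
      x 1 + x (2 * N - 1) =
        ((-1 : K) ^ (r - 1) *
          ∑ k ∈ Finset.range r, (-1 : K) ^ k * altSum c (2 * r - 1) (2 * k + 1)) * x N) ∧
    (∀ r, 1 ≤ r → N = 2 * r - 1 →
      x 1 + x (2 * N - 1) =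
        ((-1 : K) ^ (r - 1) *
          ∑ k ∈ Finset.range r, (-1 : K) ^ k * altSum c (2 * r - 2) (2 * k)) * x N) := by
  -- linear three-term recurrence
  have hlin : ∀ n, 1 ≤ n → x (n + 2) = c n * x (n + 1) - x n := by
    intro n hn
    have h1 : x (n + 1) ≠ 0 := hx (n + 1) (by omega)
    have h : c n * x (n + 1) = x n + x (n + 2) := by
      rw [hc n]; field_simp
    linear_combination -h
  -- periodicity of c with period N − 1
  have hper : ∀ n, 1 ≤ n → c (n + (N - 1)) = c n := by
    intro n hn
    have h1 := hrec n hn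
    have h2 := hrec (n + 1) (by omega)
    rw [show n + 1 + N - 1 = n + N by omega, show n + 1 + N = n + N + 1 by omega] at h2
    rw [hc (n + (N - 1)), hc n,
      show n + (N - 1) = n + N - 1 by omega,
      show n + N - 1 + 2 = n + N + 1 by omega,
      show n + N - 1 + 1 = n + N by omega,
      div_eq_div_iff (hx _ (by omega)) (hx _ (by omega))]
    linear_combination h2 - h1
  -- expansion of x from the basis (x 1, x 2)
  have ha : ∀ m, x (m + 2) = KK c m * x 2 - LL c (m + 1) * x 1 := by
    intro m
    induction m using Nat.twoStepInduction with
    | zero => simp [KK, LL]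
    | one =>
      have := hlin 1 le_rfl
      simp only [KK, LL] at *
      linear_combination this
    | more m ih1 ih2 =>
      have h : x (m + 4) = c (m + 2) * x (m + 3) - x (m + 2) := hlin (m + 2) (by omega)
      have ih2' : x (m + 3) = KK c (m + 1) * x 2 - LL c (m + 2) * x 1 := ih2
      have eK : KK c (m + 2) = c (m + 2) * KK c (m + 1) - KK c m := KK_add_two c m
      have eL : LL c (m + 3) = c (m + 2) * LL c (m + 2) - LL c (m + 1) := LL_add_two c (m + 1)
      show x (m + 4) = KK c (m + 2) * x 2 - LL c (m + 3) * x 1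
      rw [h, ih2', ih1, eK, eL]
      ring
  -- expansion of x from the basis (x N, x (N+1))
  have hb : ∀ m, x (N + m + 1) = KK c m * x (N + 1) - LL c (m + 1) * x N := by
    intro m
    induction m using Nat.twoStepInduction with
    | zero => simp [KK, LL]
    | one =>
      have h := hlin N (by omega)
      have hp := hper 1 le_rfl
      rw [show 1 + (N - 1) = N by omega] at hp
      simp only [KK, LL]
      rw [show N + 1 + 1 = N + 2 by ring, h, hp]
      ring
    | more m ih1 ih2 =>
      have h : x (N + m + 3) = c (N + m + 1) * x (N + m + 2) - x (N + m + 1) :=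
        hlin (N + m + 1) (by omega)
      have hp := hper (m + 2) (by omega)
      rw [show m + 2 + (N - 1) = N + m + 1 by omega] at hp
      rw [hp] at h
      have ih2' : x (N + m + 2) = KK c (m + 1) * x (N + 1) - LL c (m + 2) * x N := ih2
      have ih1' : x (N + m + 1) = KK c m * x (N + 1) - LL c (m + 1) * x N := ih1
      have eK : KK c (m + 2) = c (m + 2) * KK c (m + 1) - KK c m := KK_add_two c m
      have eL : LL c (m + 3) = c (m + 2) * LL c (m + 2) - LL c (m + 1) := LL_add_two c (m + 1)
      show x (N + m + 3) = KK c (m + 2) * x (N + 1) - LL c (m + 3) * x N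
      rw [h, ih2', ih1', eK, eL]
      ring
  -- determinant identity
  have hdet : ∀ m, KK c m * LL c (m + 2) - KK c (m + 1) * LL c (m + 1) = 1 := by
    intro m
    induction m with
    | zero => simp [KK, LL]
    | succ m ih =>
      have eK : KK c (m + 2) = c (m + 2) * KK c (m + 1) - KK c m := KK_add_two c m
      have eL : LL c (m + 3) = c (m + 2) * LL c (m + 2) - LL c (m + 1) := LL_add_two c (m + 1)
      show KK c (m + 1) * LL c (m + 3) - KK c (m + 2) * LL c (m + 2) = 1
      rw [eK, eL]
      linear_combination ih
  -- the main linearisation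
  have main : x 1 + x (2 * N - 1) = (KK c (N - 1) - LL c (N - 1)) * x N := by
    have hxN : x N = KK c (N - 2) * x 2 - LL c (N - 1) * x 1 := by
      have h := ha (N - 2)
      rwa [show N - 2 + 2 = N by omega, show N - 2 + 1 = N - 1 by omega] at h
    have hxN1 : x (N + 1) = KK c (N - 1) * x 2 - LL c N * x 1 := by
      have h := ha (N - 1)
      rwa [show N - 1 + 2 = N + 1 by omega, show N - 1 + 1 = N by omega] at h
    have hx2N : x (2 * N - 1) = KK c (N - 2) * x (N + 1) - LL c (N - 1) * x N := by
      have h := hb (N - 2)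
      rwa [show N + (N - 2) + 1 = 2 * N - 1 by omega,
        show N - 2 + 1 = N - 1 by omega] at h
    have hd := hdet (N - 2)
    rw [show N - 2 + 2 = N by omega, show N - 2 + 1 = N - 1 by omega] at hd
    rw [hx2N, hxN1, hxN]
    linear_combination (-(x 1)) * hd
  constructor
  · intro r hr hNr
    have hco : (-1 : K) ^ (r - 1) *
        ∑ k ∈ Finset.range r, (-1 : K) ^ k * altSum c (2 * r - 1) (2 * k + 1)
        = KK c (N - 1) - LL c (N - 1) := by
      have hn : N - 1 = 2 * r - 1 := by omega
      rw [hn, ← key_sum c (2 * r - 1) (by omega),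
        show (2 * r - 1) / 2 + 1 = r by omega, ← Finset.sum_range_reflect]
      rw [Finset.mul_sum]
      refine Finset.sum_congr rfl fun j hj => ?_
      simp only [Finset.mem_range] at hj
      rw [show 2 * r - 1 - 2 * j = 2 * (r - 1 - j) + 1 by omega]
      have h2 : (-1 : K) ^ (r - 1) * (-1 : K) ^ (r - 1 - j) = (-1 : K) ^ j := by
        rw [← pow_add, show r - 1 + (r - 1 - j) = 2 * (r - 1 - j) + j by omega,
          pow_add, pow_mul]
        simp
      rw [← mul_assoc, h2]
    rw [hco]
    exact main
  · intro r hr hNr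
    have hr2 : 2 ≤ r := by omega
    have hco : (-1 : K) ^ (r - 1) *
        ∑ k ∈ Finset.range r, (-1 : K) ^ k * altSum c (2 * r - 2) (2 * k)
        = KK c (N - 1) - LL c (N - 1) := by
      have hn : N - 1 = 2 * r - 2 := by omega
      rw [hn, ← key_sum c (2 * r - 2) (by omega),
        show (2 * r - 2) / 2 + 1 = r by omega, ← Finset.sum_range_reflect]
      rw [Finset.mul_sum]
      refine Finset.sum_congr rfl fun j hj => ?_
      simp only [Finset.mem_range] at hj
      rw [show 2 * r - 2 - 2 * j = 2 * (r - 1 - j) by omega]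
      have h2 : (-1 : K) ^ (r - 1) * (-1 : K) ^ (r - 1 - j) = (-1 : K) ^ j := by
        rw [← pow_add, show r - 1 + (r - 1 - j) = 2 * (r - 1 - j) + j by omega,
          pow_add, pow_mul]
        simp
      rw [← mul_assoc, h2]
    rw [hco]
    exact main
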